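/- Let s < −1/2. There exists a constant C > 0, depending only on s, such that for every N ≥ 2, every t > 0 and every n ≥ 2, the Kawahara Picard iterates with datum w := w_{N,s} satisfy ‖ g_n[w](t) ‖_{H^s_ξ} ≤ C^n (N t)^{n−1} ‖w‖_{L¹}^{n−2} ‖w‖_{L²}². -/

import Mathlib

open MeasureTheory Filter
open scoped ENNReal NNReal Topology

noncomputable section

/-- Convolution of two functions on `ℝ` with respect to Lebesgue measure. -/
def convR (f g : ℝ → ℂ) : ℝ → ℂ := fun x => ∫ y, f y * g (x - y)

/-- The `L¹` norm `∫ |f|`. -/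
def L1R (f : ℝ → ℂ) : ℝ≥0∞ := ∫⁻ x, (‖f x‖₊ : ℝ≥0∞)

/-- The `L²` norm `(∫ |f|²)^{1/2}`. -/
def L2R (f : ℝ → ℂ) : ℝ≥0∞ := (∫⁻ x, (‖f x‖₊ : ℝ≥0∞) ^ 2) ^ ((1 : ℝ) / 2)

/-- The `H^s` Sobolev norm read on the Fourier side. -/
def HsR (s : ℝ) (f : ℝ → ℂ) : ℝ≥0∞ :=
  (∫⁻ ξ : ℝ, ENNReal.ofReal ((1 + ξ ^ 2) ^ s) * (‖f ξ‖₊ : ℝ≥0∞) ^ 2) ^ ((1 : ℝ) / 2)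

/-- The datum `w_{N,s} = (log N)⁻¹ N^{−s} 1_{[N−1,N+1] ∪ [−N−1,−N+1]}`. -/
def wNs (N s : ℝ) : ℝ → ℂ := fun ξ =>
  (((Real.log N)⁻¹ * N ^ (-s) : ℝ) : ℂ) *
    (Set.Icc (N - 1) (N + 1) ∪ Set.Icc (-N - 1) (-N + 1)).indicator
      (fun _ => (1 : ℂ)) ξ

/-- The property that `g : ℕ → ℝ → (ℝ → ℂ)` is the family of Fourier-side Picard
iterates for the Kawahara equation `∂ₜu − ∂ₓ⁵u + 𝔟∂ₓ³u + ∂ₓ(u²) = 0` with Fourier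
datum `w`: `g 1 t ξ = e^{it(ξ⁵+𝔟ξ³)} w(ξ)` and, for `n ≥ 2`,
`g n t ξ = −iξ Σ_{n₁+n₂=n, n₁,n₂≥1} ∫₀ᵗ e^{i(t−t')(ξ⁵+𝔟ξ³)} (g n₁ t' ∗ g n₂ t')(ξ) dt'`. -/
def KawPicard (b : ℝ) (w : ℝ → ℂ) (g : ℕ → ℝ → ℝ → ℂ) : Prop :=
  (∀ t ξ : ℝ, g 1 t ξ = Complex.exp (Complex.I * t * (ξ ^ 5 + b * ξ ^ 3)) * w ξ) ∧
  (∀ n, 2 ≤ n → ∀ t ξ : ℝ, g n t ξ =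
    -Complex.I * ξ * ∑ k ∈ Finset.Ioo 0 n,
      ∫ t' in (0:ℝ)..t, Complex.exp (Complex.I * (t - t') * (ξ ^ 5 + b * ξ ^ 3)) *
        convR (g k t') (g (n - k) t') ξ)

/-- `H^s`-bounds for the Kawahara Picard iterates with datum
`w_{N,s}`, `s < −1/2`: `‖gₙ(t)‖_{H^s_ξ} ≤ Cⁿ (N t)^{n−1} ‖w‖_{L¹}^{n−2} ‖w‖_{L²}²`
for `n ≥ 2`, with `C > 0` depending only on `s`. -/
-- basel-type bound
lemma basel_aux : ∀ n : ℕ, 1 ≤ n → ∑ k ∈ Finset.Ico 1 n, (1:ℝ)/(k:ℝ)^2 ≤ 2 - 2/(n:ℝ) := by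
  intro n hn
  induction n, hn using Nat.le_induction with
  | base => simp
  | succ n hn ih =>
    rw [Finset.sum_Ico_succ_top hn]
    have h1 : (1:ℝ) ≤ (n:ℝ) := by exact_mod_cast hn
    have h2 : (0:ℝ) < (n:ℝ) := by linarith
    have h3 : (0:ℝ) < (n:ℝ) + 1 := by linarith
    have key : (1:ℝ)/(n:ℝ)^2 ≤ 2/(n:ℝ) - 2/((n:ℝ)+1) := by
      rw [div_sub_div _ _ (ne_of_gt h2) (ne_of_gt h3), div_le_div_iff₀ (by positivity) (by positivity)]
      ring_nf
      nlinarith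
    push_cast
    linarith

lemma basel (n : ℕ) : ∑ k ∈ Finset.Ioo 0 n, (1:ℝ)/(k:ℝ)^2 ≤ 2 := by
  have h : Finset.Ioo 0 n = Finset.Ico 1 n := by ext k; simp only [Finset.mem_Ioo, Finset.mem_Ico]; omega
  rw [h]
  rcases Nat.lt_or_ge n 1 with h1 | h1
  · interval_cases n <;> simp
  · have h2 : (0:ℝ) < (n:ℝ) := by exact_mod_cast h1
    linarith [basel_aux n h1, div_nonneg (by norm_num : (0:ℝ) ≤ 2) h2.le]

lemma sum_reflect (n : ℕ) (f : ℕ → ℝ) :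
    ∑ k ∈ Finset.Ioo 0 n, f (n - k) = ∑ k ∈ Finset.Ioo 0 n, f k := by
  apply Finset.sum_nbij' (fun k => n - k) (fun k => n - k) <;> intro a ha <;>
    simp only [Finset.mem_Ioo] at * <;> omega

lemma S2_bound {n : ℕ} (hn : 2 ≤ n) :
    ∑ k ∈ Finset.Ioo 0 n, (1:ℝ)/((k:ℝ)^2 * ((n-k : ℕ):ℝ)^2) ≤ 8/(n:ℝ)^2 := by
  have hterm : ∀ k ∈ Finset.Ioo 0 n,
      (1:ℝ)/((k:ℝ)^2 * ((n-k : ℕ):ℝ)^2) ≤ 2/(n:ℝ)^2 * ((1:ℝ)/(k:ℝ)^2 + (1:ℝ)/((n-k:ℕ):ℝ)^2) := by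
    intro k hk
    simp only [Finset.mem_Ioo] at hk
    have hc : ((n-k:ℕ):ℝ) = (n:ℝ) - (k:ℝ) := by
      have : k ≤ n := hk.2.le
      push_cast [Nat.cast_sub this]; ring
    have hk1 : (1:ℝ) ≤ (k:ℝ) := by exact_mod_cast hk.1
    have hnk1 : (1:ℝ) ≤ ((n-k:ℕ):ℝ) := by
      have : 1 ≤ n - k := by omega
      exact_mod_cast this
    have hnn : (n:ℝ) = (k:ℝ) + ((n-k:ℕ):ℝ) := by rw [hc]; ring
    set a := (k:ℝ); set c := ((n-k:ℕ):ℝ)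
    have h1 : (0:ℝ) < a := by linarith
    have h2 : (0:ℝ) < c := by linarith
    rw [hnn]
    rw [div_add_div _ _ (by positivity) (by positivity), div_mul_div_comm,
      div_le_div_iff₀ (by positivity) (by positivity)]
    nlinarith [sq_nonneg (a - c), sq_nonneg (a*c), sq_nonneg a, sq_nonneg c, mul_pos h1 h2]
  calc ∑ k ∈ Finset.Ioo 0 n, (1:ℝ)/((k:ℝ)^2 * ((n-k : ℕ):ℝ)^2)
      ≤ ∑ k ∈ Finset.Ioo 0 n, 2/(n:ℝ)^2 * ((1:ℝ)/(k:ℝ)^2 + (1:ℝ)/((n-k:ℕ):ℝ)^2) :=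
        Finset.sum_le_sum hterm
    _ = 2/(n:ℝ)^2 * ((∑ k ∈ Finset.Ioo 0 n, (1:ℝ)/(k:ℝ)^2)
          + ∑ k ∈ Finset.Ioo 0 n, (1:ℝ)/((n-k:ℕ):ℝ)^2) := by
        rw [← Finset.mul_sum, Finset.sum_add_distrib]
    _ ≤ 2/(n:ℝ)^2 * (2 + 2) := by
        have h2 : (0:ℝ) ≤ 2/(n:ℝ)^2 := by positivity
        have := basel n
        have hrefl : ∑ k ∈ Finset.Ioo 0 n, (1:ℝ)/((n-k:ℕ):ℝ)^2 ≤ 2 := by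
          rw [sum_reflect n (fun k => (1:ℝ)/(k:ℝ)^2)]; exact basel n
        apply mul_le_mul_of_nonneg_left _ h2
        linarith
    _ = 8/(n:ℝ)^2 := by ring

lemma ofReal_norm_eq_coe_nnnorm {E : Type*} [SeminormedAddCommGroup E] (a : E) :
    ENNReal.ofReal ‖a‖ = (‖a‖₊ : ℝ≥0∞) := ofReal_norm a

lemma ennnorm_intervalIntegral_le (F : ℝ → ℂ) (a b : ℝ) :
    (‖∫ τ in a..b, F τ‖₊ : ℝ≥0∞) ≤ ∫⁻ τ in Set.uIoc a b, (‖F τ‖₊ : ℝ≥0∞) := by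
  rw [← ofReal_norm_eq_coe_nnnorm, intervalIntegral.norm_intervalIntegral_eq,
    ofReal_norm_eq_coe_nnnorm]
  exact enorm_integral_le_lintegral_enorm _

lemma time_pow {c : ℝ} (hc : 0 ≤ c) (p : ℕ) (t : ℝ) :
    ∫⁻ τ in Set.uIoc 0 t, ENNReal.ofReal (c * |τ|^p)
      ≤ ENNReal.ofReal (c * |t|^(p+1) / ((p+1:ℕ):ℝ)) := by
  have hcont : Continuous (fun τ : ℝ => c * |τ|^p) := by fun_prop
  rcases le_or_gt 0 t with ht | ht
  · rw [Set.uIoc_of_le ht]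
    rw [← MeasureTheory.ofReal_integral_eq_lintegral_ofReal
      (hcont.integrableOn_Ioc) (Filter.Eventually.of_forall fun τ => by positivity)]
    apply ENNReal.ofReal_le_ofReal
    have habs : ∀ τ ∈ Set.Ioc (0:ℝ) t, c * |τ|^p = c * τ^p := by
      intro τ hτ; rw [abs_of_pos hτ.1]
    rw [MeasureTheory.setIntegral_congr_fun measurableSet_Ioc habs,
      ← intervalIntegral.integral_of_le ht, intervalIntegral.integral_const_mul,
      integral_pow, abs_of_nonneg ht, zero_pow (by omega : p + 1 ≠ 0)]
    apply le_of_eq; push_cast; ring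
  · rw [Set.uIoc_of_ge ht.le]
    rw [← MeasureTheory.ofReal_integral_eq_lintegral_ofReal
      (hcont.integrableOn_Ioc) (Filter.Eventually.of_forall fun τ => by positivity)]
    apply ENNReal.ofReal_le_ofReal
    have habs : ∀ τ ∈ Set.Ioc t (0:ℝ), c * |τ|^p = c * (-τ)^p := by
      intro τ hτ; rw [abs_of_nonpos hτ.2]
    rw [MeasureTheory.setIntegral_congr_fun measurableSet_Ioc habs,
      ← intervalIntegral.integral_of_le ht.le]
    have : (∫ τ in t..(0:ℝ), c * (-τ)^p) = ∫ τ in -(0:ℝ)..(-t), c * τ^p := by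
      exact intervalIntegral.integral_comp_neg (fun τ => c * τ^p)
    rw [this, neg_zero, intervalIntegral.integral_const_mul,
      integral_pow, abs_of_neg ht, zero_pow (by omega : p + 1 ≠ 0)]
    apply le_of_eq; push_cast; ring

lemma norm_exp_I_mul_real (r : ℝ) : ‖Complex.exp (Complex.I * r)‖ = 1 := by
  rw [mul_comm]
  exact Complex.norm_exp_ofReal_mul_I r

lemma ennnorm_convR_le (f h : ℝ → ℂ) (ξ : ℝ) :
    (‖convR f h ξ‖₊ : ℝ≥0∞) ≤ ∫⁻ y, (‖f y‖₊ : ℝ≥0∞) * (‖h (ξ - y)‖₊ : ℝ≥0∞) := by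
  refine le_trans (enorm_integral_le_lintegral_enorm _) (le_of_eq (lintegral_congr fun y => ?_))
  simp [nnnorm_mul]
  rfl

lemma lintegral_conv_le {f h : ℝ → ℂ} (hf : Measurable f) (hh : Measurable h) :
    (∫⁻ ξ, (‖convR f h ξ‖₊ : ℝ≥0∞))
      ≤ (∫⁻ y, (‖f y‖₊ : ℝ≥0∞)) * ∫⁻ y, (‖h y‖₊ : ℝ≥0∞) := by
  have hmeas : Measurable (fun z : ℝ × ℝ => (‖f z.2‖₊ : ℝ≥0∞) * (‖h (z.1 - z.2)‖₊ : ℝ≥0∞)) :=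
    ((hf.comp measurable_snd).enorm).mul
      ((hh.comp (measurable_fst.sub measurable_snd)).enorm)
  calc (∫⁻ ξ, (‖convR f h ξ‖₊ : ℝ≥0∞))
      ≤ ∫⁻ ξ, ∫⁻ y, (‖f y‖₊ : ℝ≥0∞) * (‖h (ξ - y)‖₊ : ℝ≥0∞) :=
        lintegral_mono fun ξ => ennnorm_convR_le f h ξ
    _ = ∫⁻ y, ∫⁻ ξ, (‖f y‖₊ : ℝ≥0∞) * (‖h (ξ - y)‖₊ : ℝ≥0∞) :=
        lintegral_lintegral_swap hmeas.aemeasurable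
    _ = ∫⁻ y, (‖f y‖₊ : ℝ≥0∞) * ∫⁻ ξ, (‖h (ξ - y)‖₊ : ℝ≥0∞) := by
        refine lintegral_congr fun y => ?_
        exact lintegral_const_mul _ (hh.comp (measurable_id.sub measurable_const)).enorm
    _ = ∫⁻ y, (‖f y‖₊ : ℝ≥0∞) * ∫⁻ ξ, (‖h ξ‖₊ : ℝ≥0∞) := by
        refine lintegral_congr fun y => ?_
        congr 1
        exact (measurePreserving_sub_right volume y).lintegral_comp hh.enorm
    _ = (∫⁻ y, (‖f y‖₊ : ℝ≥0∞)) * ∫⁻ ξ, (‖h ξ‖₊ : ℝ≥0∞) :=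
        lintegral_mul_const _ hf.enorm

lemma measurable_conv_param {gk gj : ℝ × ℝ → ℂ} (hk : Measurable gk) (hj : Measurable gj) :
    Measurable (fun p : ℝ × ℝ => convR (fun y => gk (p.1, y)) (fun y => gj (p.1, y)) p.2) := by
  have : Measurable (fun q : (ℝ × ℝ) × ℝ => gk (q.1.1, q.2) * gj (q.1.1, q.1.2 - q.2)) := by
    apply Measurable.mul
    · exact hk.comp ((measurable_fst.comp measurable_fst).prodMk measurable_snd)
    · exact hj.comp ((measurable_fst.comp measurable_fst).prodMk
        ((measurable_snd.comp measurable_fst).sub measurable_snd))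
  exact (this.stronglyMeasurable.integral_prod_right').measurable

-- wNs facts
def mmc (N s : ℝ) : ℝ := (Real.log N)⁻¹ * N ^ (-s)

lemma mmc_pos {N : ℝ} (hN : 2 ≤ N) (s : ℝ) : 0 < mmc N s :=
  mul_pos (inv_pos.2 (Real.log_pos (by linarith))) (Real.rpow_pos_of_pos (by linarith) _)

lemma wNs_ennnorm {N s : ℝ} (hN : 2 ≤ N) (ξ : ℝ) :
    (‖wNs N s ξ‖₊ : ℝ≥0∞) =
      (Set.Icc (N - 1) (N + 1) ∪ Set.Icc (-N - 1) (-N + 1)).indicator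
        (fun _ => ENNReal.ofReal (mmc N s)) ξ := by
  have hm := (mmc_pos hN s).le
  by_cases hξ : ξ ∈ Set.Icc (N - 1) (N + 1) ∪ Set.Icc (-N - 1) (-N + 1)
  · rw [Set.indicator_of_mem hξ]
    simp only [wNs, Set.indicator_of_mem hξ, mul_one]
    have hm' : 0 ≤ (Real.log N)⁻¹ * N ^ (-s) := hm
    rw [← ofReal_norm_eq_coe_nnnorm, Complex.norm_real, Real.norm_eq_abs,
      abs_of_nonneg hm']
    rfl
  · rw [Set.indicator_of_notMem hξ]
    simp [wNs, Set.indicator_of_notMem hξ]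

lemma wNs_ennnorm_le {N s : ℝ} (hN : 2 ≤ N) (ξ : ℝ) :
    (‖wNs N s ξ‖₊ : ℝ≥0∞) ≤ ENNReal.ofReal (mmc N s) := by
  rw [wNs_ennnorm hN]
  by_cases hξ : ξ ∈ Set.Icc (N - 1) (N + 1) ∪ Set.Icc (-N - 1) (-N + 1)
  · rw [Set.indicator_of_mem hξ]
  · rw [Set.indicator_of_notMem hξ]
    exact zero_le

lemma wNs_zero {N s : ℝ} (hN : 2 ≤ N) {ξ : ℝ} (hξ : N + 1 < |ξ|) : wNs N s ξ = 0 := by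
  have : ξ ∉ Set.Icc (N - 1) (N + 1) ∪ Set.Icc (-N - 1) (-N + 1) := by
    intro h
    rcases h with h | h
    · rw [Set.mem_Icc] at h
      rcases abs_cases ξ with ⟨he, _⟩ | ⟨he, _⟩ <;> rw [he] at hξ <;> linarith
    · rw [Set.mem_Icc] at h
      rcases abs_cases ξ with ⟨he, _⟩ | ⟨he, _⟩ <;> rw [he] at hξ <;> linarith
  simp [wNs, Set.indicator_of_notMem this]

lemma measurableSet_UNs (N : ℝ) :
    MeasurableSet (Set.Icc (N - 1) (N + 1) ∪ Set.Icc (-N - 1) (-N + 1)) :=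
  measurableSet_Icc.union measurableSet_Icc

lemma volume_UNs {N : ℝ} (hN : 2 ≤ N) :
    volume (Set.Icc (N - 1) (N + 1) ∪ Set.Icc (-N - 1) (-N + 1)) = ENNReal.ofReal 4 := by
  have hdisj : Disjoint (Set.Icc (N - 1) (N + 1)) (Set.Icc (-N - 1) (-N + 1)) := by
    rw [Set.disjoint_left]
    intro ξ h1 h2
    rw [Set.mem_Icc] at h1 h2
    linarith
  rw [measure_union hdisj measurableSet_Icc, Real.volume_Icc, Real.volume_Icc]
  rw [show N + 1 - (N - 1) = 2 by ring, show -N + 1 - (-N - 1) = 2 by ring,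
    ← ENNReal.ofReal_add (by norm_num) (by norm_num)]
  norm_num

lemma lintegral_wNs {N s : ℝ} (hN : 2 ≤ N) :
    (∫⁻ ξ, (‖wNs N s ξ‖₊ : ℝ≥0∞)) = ENNReal.ofReal (4 * mmc N s) := by
  have := fun ξ => wNs_ennnorm (s := s) hN ξ
  rw [lintegral_congr this, lintegral_indicator (measurableSet_UNs N),
    setLIntegral_const, volume_UNs hN, ← ENNReal.ofReal_mul (mmc_pos hN s).le]
  ring_nf

lemma lintegral_wNs_sq {N s : ℝ} (hN : 2 ≤ N) :
    (∫⁻ ξ, (‖wNs N s ξ‖₊ : ℝ≥0∞) ^ 2) = ENNReal.ofReal (4 * (mmc N s) ^ 2) := by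
  have hpt : ∀ ξ, (‖wNs N s ξ‖₊ : ℝ≥0∞) ^ 2 =
      (Set.Icc (N - 1) (N + 1) ∪ Set.Icc (-N - 1) (-N + 1)).indicator
        (fun _ => ENNReal.ofReal ((mmc N s) ^ 2)) ξ := by
    intro ξ
    rw [wNs_ennnorm hN]
    by_cases hξ : ξ ∈ Set.Icc (N - 1) (N + 1) ∪ Set.Icc (-N - 1) (-N + 1)
    · rw [Set.indicator_of_mem hξ, Set.indicator_of_mem hξ,
        ← ENNReal.ofReal_pow (mmc_pos hN s).le]
    · rw [Set.indicator_of_notMem hξ, Set.indicator_of_notMem hξ]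
      simp
  rw [lintegral_congr hpt, lintegral_indicator (measurableSet_UNs N),
    setLIntegral_const, volume_UNs hN, ← ENNReal.ofReal_mul (by positivity)]
  ring_nf

lemma measurable_wNs (N s : ℝ) : Measurable (wNs N s) :=
  measurable_const.mul (measurable_const.indicator (measurableSet_UNs N))

lemma norm_exp_kaw1 (x z bb : ℝ) :
    ‖Complex.exp (Complex.I * (x:ℂ) * ((z:ℂ)^5 + (bb:ℂ)*(z:ℂ)^3))‖ = 1 := by
  have : Complex.I * (x:ℂ) * ((z:ℂ)^5 + (bb:ℂ)*(z:ℂ)^3)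
      = Complex.I * ((x*(z^5+bb*z^3) : ℝ) : ℂ) := by push_cast; ring
  rw [this, norm_exp_I_mul_real]

lemma norm_exp_kaw2 (x y z bb : ℝ) :
    ‖Complex.exp (Complex.I * ((x:ℂ) - (y:ℂ)) * ((z:ℂ)^5 + (bb:ℂ)*(z:ℂ)^3))‖ = 1 := by
  have : Complex.I * ((x:ℂ) - (y:ℂ)) * ((z:ℂ)^5 + (bb:ℂ)*(z:ℂ)^3)
      = Complex.I * (((x-y)*(z^5+bb*z^3) : ℝ) : ℂ) := by push_cast; ring
  rw [this, norm_exp_I_mul_real]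

lemma measurable_parametric_intervalIntegral {Φ : (ℝ × ℝ) → ℝ → ℂ}
    (hΦ : Measurable (fun q : (ℝ × ℝ) × ℝ => Φ q.1 q.2)) :
    Measurable (fun p : ℝ × ℝ => ∫ τ in (0:ℝ)..p.1, Φ p τ) := by
  have hS1 : MeasurableSet {q : (ℝ × ℝ) × ℝ | q.2 ∈ Set.Ioc (0:ℝ) q.1.1} := by
    have : {q : (ℝ × ℝ) × ℝ | q.2 ∈ Set.Ioc (0:ℝ) q.1.1}
        = {q : (ℝ × ℝ) × ℝ | (0:ℝ) < q.2} ∩ {q : (ℝ × ℝ) × ℝ | q.2 ≤ q.1.1} := rfl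
    rw [this]
    exact (measurableSet_lt measurable_const measurable_snd).inter
      (measurableSet_le measurable_snd measurable_fst.fst)
  have hS2 : MeasurableSet {q : (ℝ × ℝ) × ℝ | q.2 ∈ Set.Ioc q.1.1 (0:ℝ)} := by
    have : {q : (ℝ × ℝ) × ℝ | q.2 ∈ Set.Ioc q.1.1 (0:ℝ)}
        = {q : (ℝ × ℝ) × ℝ | q.1.1 < q.2} ∩ {q : (ℝ × ℝ) × ℝ | q.2 ≤ (0:ℝ)} := rfl
    rw [this]
    exact (measurableSet_lt measurable_fst.fst measurable_snd).inter
      (measurableSet_le measurable_snd measurable_const)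
  have hrep : (fun p : ℝ × ℝ => ∫ τ in (0:ℝ)..p.1, Φ p τ)
      = fun p : ℝ × ℝ =>
        (∫ τ, ({q : (ℝ × ℝ) × ℝ | q.2 ∈ Set.Ioc (0:ℝ) q.1.1}.indicator
            (fun q => Φ q.1 q.2) (p, τ)))
        - ∫ τ, ({q : (ℝ × ℝ) × ℝ | q.2 ∈ Set.Ioc q.1.1 (0:ℝ)}.indicator
            (fun q => Φ q.1 q.2) (p, τ)) := by
    funext p
    have h1 : (fun τ => ({q : (ℝ × ℝ) × ℝ | q.2 ∈ Set.Ioc (0:ℝ) q.1.1}.indicator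
        (fun q => Φ q.1 q.2) (p, τ))) = (Set.Ioc (0:ℝ) p.1).indicator (fun τ => Φ p τ) := by
      funext τ
      by_cases hτ : τ ∈ Set.Ioc (0:ℝ) p.1
      · rw [Set.indicator_of_mem
          (show (p,τ) ∈ {q : (ℝ × ℝ) × ℝ | q.2 ∈ Set.Ioc (0:ℝ) q.1.1} from hτ),
          Set.indicator_of_mem hτ]
      · rw [Set.indicator_of_notMem
          (show (p,τ) ∉ {q : (ℝ × ℝ) × ℝ | q.2 ∈ Set.Ioc (0:ℝ) q.1.1} from hτ),
          Set.indicator_of_notMem hτ]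
    have h2 : (fun τ => ({q : (ℝ × ℝ) × ℝ | q.2 ∈ Set.Ioc q.1.1 (0:ℝ)}.indicator
        (fun q => Φ q.1 q.2) (p, τ))) = (Set.Ioc p.1 (0:ℝ)).indicator (fun τ => Φ p τ) := by
      funext τ
      by_cases hτ : τ ∈ Set.Ioc p.1 (0:ℝ)
      · rw [Set.indicator_of_mem
          (show (p,τ) ∈ {q : (ℝ × ℝ) × ℝ | q.2 ∈ Set.Ioc q.1.1 (0:ℝ)} from hτ),
          Set.indicator_of_mem hτ]
      · rw [Set.indicator_of_notMem
          (show (p,τ) ∉ {q : (ℝ × ℝ) × ℝ | q.2 ∈ Set.Ioc q.1.1 (0:ℝ)} from hτ),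
          Set.indicator_of_notMem hτ]
    rw [h1, h2, integral_indicator measurableSet_Ioc, integral_indicator measurableSet_Ioc]
    rfl
  rw [hrep]
  exact ((((hΦ.indicator hS1).stronglyMeasurable).integral_prod_right').measurable).sub
    ((((hΦ.indicator hS2).stronglyMeasurable).integral_prod_right').measurable)

set_option maxHeartbeats 1000000 in
lemma main_inv {b N s : ℝ} (hN : 2 ≤ N) {g : ℕ → ℝ → ℝ → ℂ} (hg : KawPicard b (wNs N s) g) :
    ∀ n : ℕ, 1 ≤ n →
      Measurable (fun p : ℝ × ℝ => g n p.1 p.2) ∧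
      (∀ t ξ : ℝ, (n : ℝ) * (N + 1) < |ξ| → g n t ξ = 0) ∧
      (∀ t ξ : ℝ, (‖g n t ξ‖₊ : ℝ≥0∞) ≤
        ENNReal.ofReal (mmc N s * (128 * N * mmc N s * |t|) ^ (n - 1))) ∧
      (∀ t : ℝ, (∫⁻ ξ, (‖g n t ξ‖₊ : ℝ≥0∞)) ≤
        ENNReal.ofReal (4 * mmc N s * (128 * N * mmc N s * |t|) ^ (n - 1) / (n:ℝ) ^ 2)) := by
  have hm : 0 < mmc N s := mmc_pos hN s
  set m : ℝ := mmc N s with hm_def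
  have hN0 : (0:ℝ) < N := by linarith
  have hK : 0 < 128 * N * m := by positivity
  intro n
  induction n using Nat.strong_induction_on with
  | _ n ih =>
  intro hn1
  rcases eq_or_lt_of_le hn1 with h1 | h2
  · -- base case n = 1
    obtain rfl : n = 1 := h1.symm
    have hexpnn : ∀ t ξ : ℝ, (‖g 1 t ξ‖₊ : ℝ≥0∞) = (‖wNs N s ξ‖₊ : ℝ≥0∞) := by
      intro t ξ
      rw [← ofReal_norm_eq_coe_nnnorm, hg.1 t ξ, norm_mul, norm_exp_kaw1 t ξ b, one_mul,
        ofReal_norm_eq_coe_nnnorm]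
    refine ⟨?_, ?_, ?_, ?_⟩
    · have hrep : (fun p : ℝ × ℝ => g 1 p.1 p.2)
          = fun p : ℝ × ℝ => Complex.exp (Complex.I * (p.1:ℂ) *
              ((p.2:ℂ) ^ 5 + (b:ℂ) * (p.2:ℂ) ^ 3)) * wNs N s p.2 :=
        funext fun p => hg.1 p.1 p.2
      rw [hrep]
      apply Measurable.mul
      · apply Continuous.measurable
        apply Complex.continuous_exp.comp
        fun_prop
      · exact (measurable_wNs N s).comp measurable_snd
    · intro t ξ hξ
      rw [hg.1 t ξ, wNs_zero hN (by rw [Nat.cast_one, one_mul] at hξ; exact hξ), mul_zero]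
    · intro t ξ
      rw [hexpnn t ξ]
      simp only [Nat.sub_self, pow_zero, mul_one]
      exact wNs_ennnorm_le hN ξ
    · intro t
      rw [lintegral_congr (hexpnn t), lintegral_wNs hN]
      apply ENNReal.ofReal_le_ofReal
      simp only [Nat.sub_self, pow_zero, mul_one, Nat.cast_one, one_pow, div_one, le_refl]
      exact le_rfl
  · -- inductive step, 2 ≤ n
    have hn2 : 2 ≤ n := h2
    have hform := hg.2 n hn2
    have IH : ∀ k ∈ Finset.Ioo 0 n,
        (Measurable (fun p : ℝ × ℝ => g k p.1 p.2) ∧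
          (∀ t ξ : ℝ, (k : ℝ) * (N + 1) < |ξ| → g k t ξ = 0) ∧
          (∀ t ξ : ℝ, (‖g k t ξ‖₊ : ℝ≥0∞) ≤
            ENNReal.ofReal (m * (128 * N * m * |t|) ^ (k - 1))) ∧
          (∀ t : ℝ, (∫⁻ ξ, (‖g k t ξ‖₊ : ℝ≥0∞)) ≤
            ENNReal.ofReal (4 * m * (128 * N * m * |t|) ^ (k - 1) / (k:ℝ) ^ 2))) ∧
        (Measurable (fun p : ℝ × ℝ => g (n-k) p.1 p.2) ∧
          (∀ t ξ : ℝ, ((n-k : ℕ) : ℝ) * (N + 1) < |ξ| → g (n-k) t ξ = 0) ∧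
          (∀ t ξ : ℝ, (‖g (n-k) t ξ‖₊ : ℝ≥0∞) ≤
            ENNReal.ofReal (m * (128 * N * m * |t|) ^ (n - k - 1))) ∧
          (∀ t : ℝ, (∫⁻ ξ, (‖g (n-k) t ξ‖₊ : ℝ≥0∞)) ≤
            ENNReal.ofReal (4 * m * (128 * N * m * |t|) ^ (n - k - 1) / ((n-k:ℕ):ℝ) ^ 2))) := by
      intro k hk
      obtain ⟨hk0, hkn⟩ := Finset.mem_Ioo.mp hk
      exact ⟨ih k hkn hk0, ih (n-k) (by omega) (by omega)⟩
    -- measurability of sections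
    have hsec : ∀ k ∈ Finset.Ioo 0 n, ∀ τ : ℝ,
        Measurable (g k τ) ∧ Measurable (g (n-k) τ) := by
      intro k hk τ
      constructor
      · exact (IH k hk).1.1.comp (measurable_const.prodMk measurable_id)
      · exact (IH k hk).2.1.comp (measurable_const.prodMk measurable_id)
    -- joint measurability of convolution
    have hCm : ∀ k ∈ Finset.Ioo 0 n,
        Measurable (fun p : ℝ × ℝ => convR (g k p.1) (g (n-k) p.1) p.2) := by
      intro k hk
      exact measurable_conv_param (IH k hk).1.1 (IH k hk).2.1
    -- pointwise bound on the convolution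
    have hCb : ∀ k ∈ Finset.Ioo 0 n, ∀ τ ξ : ℝ,
        (‖convR (g k τ) (g (n-k) τ) ξ‖₊ : ℝ≥0∞) ≤
          ENNReal.ofReal ((4 * m ^ 2 / (k:ℝ) ^ 2) * (128 * N * m * |τ|) ^ (n - 2)) := by
      intro k hk τ ξ
      obtain ⟨hk0, hkn⟩ := Finset.mem_Ioo.mp hk
      calc (‖convR (g k τ) (g (n-k) τ) ξ‖₊ : ℝ≥0∞)
          ≤ ∫⁻ y, (‖g k τ y‖₊ : ℝ≥0∞) * (‖g (n-k) τ (ξ - y)‖₊ : ℝ≥0∞) :=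
            ennnorm_convR_le _ _ _
        _ ≤ ∫⁻ y, (‖g k τ y‖₊ : ℝ≥0∞) *
              ENNReal.ofReal (m * (128 * N * m * |τ|) ^ (n - k - 1)) :=
            lintegral_mono fun y => mul_le_mul_right ((IH k hk).2.2.2.1 τ (ξ - y)) _
        _ = (∫⁻ y, (‖g k τ y‖₊ : ℝ≥0∞)) *
              ENNReal.ofReal (m * (128 * N * m * |τ|) ^ (n - k - 1)) :=
            lintegral_mul_const _ ((hsec k hk τ).1.enorm)
        _ ≤ ENNReal.ofReal (4 * m * (128 * N * m * |τ|) ^ (k - 1) / (k:ℝ) ^ 2) *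
              ENNReal.ofReal (m * (128 * N * m * |τ|) ^ (n - k - 1)) :=
            mul_le_mul_left ((IH k hk).1.2.2.2 τ) _
        _ = ENNReal.ofReal ((4 * m * (128 * N * m * |τ|) ^ (k - 1) / (k:ℝ) ^ 2) *
              (m * (128 * N * m * |τ|) ^ (n - k - 1))) :=
            (ENNReal.ofReal_mul (by positivity)).symm
        _ = ENNReal.ofReal ((4 * m ^ 2 / (k:ℝ) ^ 2) * (128 * N * m * |τ|) ^ (n - 2)) := by
            congr 1
            have he : (k - 1) + (n - k - 1) = n - 2 := by omega
            rw [← he, pow_add]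
            ring
    -- L¹ bound on the convolution
    have hCl1 : ∀ k ∈ Finset.Ioo 0 n, ∀ τ : ℝ,
        (∫⁻ ξ, (‖convR (g k τ) (g (n-k) τ) ξ‖₊ : ℝ≥0∞)) ≤
          ENNReal.ofReal ((16 * m ^ 2 / ((k:ℝ) ^ 2 * ((n-k:ℕ):ℝ) ^ 2)) *
            (128 * N * m * |τ|) ^ (n - 2)) := by
      intro k hk τ
      obtain ⟨hk0, hkn⟩ := Finset.mem_Ioo.mp hk
      calc (∫⁻ ξ, (‖convR (g k τ) (g (n-k) τ) ξ‖₊ : ℝ≥0∞))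
          ≤ (∫⁻ y, (‖g k τ y‖₊ : ℝ≥0∞)) * ∫⁻ y, (‖g (n-k) τ y‖₊ : ℝ≥0∞) :=
            lintegral_conv_le (hsec k hk τ).1 (hsec k hk τ).2
        _ ≤ ENNReal.ofReal (4 * m * (128 * N * m * |τ|) ^ (k - 1) / (k:ℝ) ^ 2) *
              ENNReal.ofReal (4 * m * (128 * N * m * |τ|) ^ (n - k - 1) / ((n-k:ℕ):ℝ) ^ 2) :=
            mul_le_mul' ((IH k hk).1.2.2.2 τ) ((IH k hk).2.2.2.2 τ)
        _ = ENNReal.ofReal ((4 * m * (128 * N * m * |τ|) ^ (k - 1) / (k:ℝ) ^ 2) *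
              (4 * m * (128 * N * m * |τ|) ^ (n - k - 1) / ((n-k:ℕ):ℝ) ^ 2)) :=
            (ENNReal.ofReal_mul (by positivity)).symm
        _ = ENNReal.ofReal ((16 * m ^ 2 / ((k:ℝ) ^ 2 * ((n-k:ℕ):ℝ) ^ 2)) *
              (128 * N * m * |τ|) ^ (n - 2)) := by
            congr 1
            have he : (k - 1) + (n - k - 1) = n - 2 := by omega
            rw [← he, pow_add]
            ring
    -- support
    have hS : ∀ t ξ : ℝ, (n : ℝ) * (N + 1) < |ξ| → g n t ξ = 0 := by
      intro t ξ hξ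
      rw [hform t ξ]
      have hz : ∀ k ∈ Finset.Ioo 0 n,
          (∫ τ in (0:ℝ)..t, Complex.exp (Complex.I * ((t:ℂ) - (τ:ℂ)) *
            ((ξ:ℂ) ^ 5 + (b:ℂ) * (ξ:ℂ) ^ 3)) * convR (g k τ) (g (n-k) τ) ξ) = 0 := by
        intro k hk
        obtain ⟨hk0, hkn⟩ := Finset.mem_Ioo.mp hk
        have hconv : ∀ τ : ℝ, convR (g k τ) (g (n-k) τ) ξ = 0 := by
          intro τ
          have : (fun y => g k τ y * g (n-k) τ (ξ - y)) = fun _ => (0:ℂ) := by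
            funext y
            by_cases hy : (k:ℝ) * (N + 1) < |y|
            · rw [(IH k hk).1.2.1 τ y hy, zero_mul]
            · push_neg at hy
              have hnk : ((n-k:ℕ):ℝ) = (n:ℝ) - (k:ℝ) := by
                push_cast [Nat.cast_sub hkn.le]; ring
              have : ((n-k:ℕ):ℝ) * (N + 1) < |ξ - y| := by
                have h3 := abs_sub_abs_le_abs_sub ξ y
                rw [hnk]
                nlinarith [abs_nonneg y, abs_nonneg ξ]
              rw [(IH k hk).2.2.1 τ (ξ - y) this, mul_zero]
          unfold convR
          rw [this, integral_zero]
        have : (fun τ : ℝ => Complex.exp (Complex.I * ((t:ℂ) - (τ:ℂ)) *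
            ((ξ:ℂ) ^ 5 + (b:ℂ) * (ξ:ℂ) ^ 3)) * convR (g k τ) (g (n-k) τ) ξ)
            = fun _ => (0:ℂ) := by
          funext τ; rw [hconv τ, mul_zero]
        rw [this, intervalIntegral.integral_zero]
      rw [Finset.sum_congr rfl hz, Finset.sum_const, smul_zero, mul_zero]
    -- pointwise master bound
    have hpt : ∀ t ξ : ℝ, (‖g n t ξ‖₊ : ℝ≥0∞) ≤
        ENNReal.ofReal ((n:ℝ) * (N + 1)) *
          ∑ k ∈ Finset.Ioo 0 n, ∫⁻ τ in Set.uIoc 0 t,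
            (‖convR (g k τ) (g (n-k) τ) ξ‖₊ : ℝ≥0∞) := by
      intro t ξ
      by_cases hξ : (n : ℝ) * (N + 1) < |ξ|
      · rw [hS t ξ hξ]
        simp
      · push_neg at hξ
        rw [hform t ξ]
        have h1 : (‖-Complex.I * (ξ:ℂ) * ∑ k ∈ Finset.Ioo 0 n,
            ∫ τ in (0:ℝ)..t, Complex.exp (Complex.I * ((t:ℂ) - (τ:ℂ)) *
              ((ξ:ℂ) ^ 5 + (b:ℂ) * (ξ:ℂ) ^ 3)) * convR (g k τ) (g (n-k) τ) ξ‖₊ : ℝ≥0∞)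
            = (‖-Complex.I * (ξ:ℂ)‖₊ : ℝ≥0∞) * (‖∑ k ∈ Finset.Ioo 0 n,
            ∫ τ in (0:ℝ)..t, Complex.exp (Complex.I * ((t:ℂ) - (τ:ℂ)) *
              ((ξ:ℂ) ^ 5 + (b:ℂ) * (ξ:ℂ) ^ 3)) * convR (g k τ) (g (n-k) τ) ξ‖₊ : ℝ≥0∞) := by
          rw [nnnorm_mul]
          push_cast
          ring
        rw [h1]
        have h2 : (‖-Complex.I * (ξ:ℂ)‖₊ : ℝ≥0∞) ≤ ENNReal.ofReal ((n:ℝ) * (N + 1)) := by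
          rw [← ofReal_norm_eq_coe_nnnorm, norm_mul, norm_neg, Complex.norm_I, one_mul,
            Complex.norm_real, Real.norm_eq_abs]
          exact ENNReal.ofReal_le_ofReal hξ
        refine mul_le_mul' h2 ?_
        calc (‖∑ k ∈ Finset.Ioo 0 n, ∫ τ in (0:ℝ)..t, Complex.exp (Complex.I *
              ((t:ℂ) - (τ:ℂ)) * ((ξ:ℂ) ^ 5 + (b:ℂ) * (ξ:ℂ) ^ 3)) *
              convR (g k τ) (g (n-k) τ) ξ‖₊ : ℝ≥0∞)
            ≤ ∑ k ∈ Finset.Ioo 0 n, (‖∫ τ in (0:ℝ)..t, Complex.exp (Complex.I *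
              ((t:ℂ) - (τ:ℂ)) * ((ξ:ℂ) ^ 5 + (b:ℂ) * (ξ:ℂ) ^ 3)) *
              convR (g k τ) (g (n-k) τ) ξ‖₊ : ℝ≥0∞) := by
              rw [← ENNReal.coe_finset_sum]
              exact_mod_cast nnnorm_sum_le _ _
          _ ≤ ∑ k ∈ Finset.Ioo 0 n, ∫⁻ τ in Set.uIoc 0 t,
                (‖convR (g k τ) (g (n-k) τ) ξ‖₊ : ℝ≥0∞) := by
              apply Finset.sum_le_sum
              intro k hk
              refine le_trans (ennnorm_intervalIntegral_le _ 0 t) (le_of_eq ?_)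
              apply lintegral_congr
              intro τ
              rw [← ofReal_norm_eq_coe_nnnorm, norm_mul, norm_exp_kaw2 t τ ξ b, one_mul,
                ofReal_norm_eq_coe_nnnorm]
    -- common arithmetic facts
    have hd : (0:ℝ) < (n:ℝ) - 1 := by
      have : (2:ℝ) ≤ (n:ℝ) := by exact_mod_cast hn2
      linarith
    have hn' : (2:ℝ) ≤ (n:ℝ) := by exact_mod_cast hn2
    have hc1 : ((n-2+1 : ℕ):ℝ) = (n:ℝ) - 1 := by
      rw [show n-2+1 = n-1 from by omega, Nat.cast_sub (by omega : 1 ≤ n), Nat.cast_one]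
    -- M bound
    have hM : ∀ t ξ : ℝ, (‖g n t ξ‖₊ : ℝ≥0∞) ≤
        ENNReal.ofReal (m * (128 * N * m * |t|) ^ (n - 1)) := by
      intro t ξ
      refine le_trans (hpt t ξ) ?_
      have hp1 : |t|^(n-2+1) = |t|^(n-1) := by rw [show n-2+1 = n-1 from by omega]
      calc ENNReal.ofReal ((n:ℝ) * (N + 1)) * ∑ k ∈ Finset.Ioo 0 n,
            ∫⁻ τ in Set.uIoc 0 t, (‖convR (g k τ) (g (n-k) τ) ξ‖₊ : ℝ≥0∞)
          ≤ ENNReal.ofReal ((n:ℝ) * (N + 1)) * ∑ k ∈ Finset.Ioo 0 n,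
              ENNReal.ofReal (4*m^2/(k:ℝ)^2 * (128*N*m)^(n-2) * |t|^(n-2+1) /
                ((n-2+1:ℕ):ℝ)) := by
            apply mul_le_mul_right
            apply Finset.sum_le_sum
            intro k hk
            have e1 : ∀ τ : ℝ, ENNReal.ofReal ((4*m^2/(k:ℝ)^2) * (128*N*m*|τ|)^(n-2))
                = ENNReal.ofReal (4*m^2/(k:ℝ)^2 * (128*N*m)^(n-2) * |τ|^(n-2)) := by
              intro τ; congr 1; rw [mul_pow]; ring
            refine le_trans (lintegral_mono fun τ => hCb k hk τ ξ) ?_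
            rw [lintegral_congr e1]
            exact time_pow (c := 4*m^2/(k:ℝ)^2 * (128*N*m)^(n-2)) (by positivity) (n-2) t
        _ = ENNReal.ofReal (((n:ℝ)*(N+1)) * ∑ k ∈ Finset.Ioo 0 n,
              4*m^2/(k:ℝ)^2 * (128*N*m)^(n-2) * |t|^(n-2+1) / ((n-2+1:ℕ):ℝ)) := by
            rw [← ENNReal.ofReal_sum_of_nonneg (fun k _ => by positivity),
              ← ENNReal.ofReal_mul (by positivity)]
        _ ≤ ENNReal.ofReal (m * (128*N*m*|t|)^(n-1)) := by
            apply ENNReal.ofReal_le_ofReal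
            have hfac : ∑ k ∈ Finset.Ioo 0 n,
                4*m^2/(k:ℝ)^2 * (128*N*m)^(n-2) * |t|^(n-2+1) / ((n-2+1:ℕ):ℝ)
                = (4*m^2*(128*N*m)^(n-2)*|t|^(n-1)/((n:ℝ)-1)) *
                    ∑ k ∈ Finset.Ioo 0 n, (1:ℝ)/(k:ℝ)^2 := by
              rw [Finset.mul_sum]
              apply Finset.sum_congr rfl
              intro k _
              rw [hp1, hc1]
              ring
            rw [hfac]
            have hB := basel n
            have hpow : (128*N*m*|t|)^(n-1) = (128*N*m)^(n-2) * (128*N*m) * |t|^(n-1) := by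
              rw [mul_pow, ← pow_succ, show n-2+1 = n-1 from by omega]
            rw [hpow]
            have hAB : (0:ℝ) ≤ (128*N*m)^(n-2) * |t|^(n-1) := by positivity
            have hnn : (0:ℝ) ≤ 4*m^2*(128*N*m)^(n-2)*|t|^(n-1)/((n:ℝ)-1) :=
              div_nonneg (by positivity) hd.le
            have key : (n:ℝ)*(N+1)*(8*m^2)/((n:ℝ)-1) ≤ 128*N*m*m := by
              rw [div_le_iff₀ hd]
              have h1 : (n:ℝ)*(N+1) ≤ 4*N*((n:ℝ)-1) := by nlinarith
              calc (n:ℝ)*(N+1)*(8*m^2) ≤ 4*N*((n:ℝ)-1)*(8*m^2) :=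
                    mul_le_mul_of_nonneg_right h1 (by positivity)
                _ ≤ 128*N*m*m*((n:ℝ)-1) := by nlinarith [sq_nonneg m, mul_pos hN0 hd]
            calc ((n:ℝ)*(N+1)) * ((4*m^2*(128*N*m)^(n-2)*|t|^(n-1)/((n:ℝ)-1)) *
                  ∑ k ∈ Finset.Ioo 0 n, (1:ℝ)/(k:ℝ)^2)
                ≤ ((n:ℝ)*(N+1)) * ((4*m^2*(128*N*m)^(n-2)*|t|^(n-1)/((n:ℝ)-1)) * 2) := by
                  have hnN : (0:ℝ) ≤ (n:ℝ)*(N+1) := by positivity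
                  exact mul_le_mul_of_nonneg_left (mul_le_mul_of_nonneg_left hB hnn) hnN
              _ = ((n:ℝ)*(N+1)*(8*m^2)/((n:ℝ)-1)) * ((128*N*m)^(n-2) * |t|^(n-1)) := by
                  ring
              _ ≤ (128*N*m*m) * ((128*N*m)^(n-2) * |t|^(n-1)) :=
                  mul_le_mul_of_nonneg_right key hAB
              _ = m * ((128*N*m)^(n-2) * (128*N*m) * |t|^(n-1)) := by ring
    -- A bound
    have hA : ∀ t : ℝ, (∫⁻ ξ, (‖g n t ξ‖₊ : ℝ≥0∞)) ≤
        ENNReal.ofReal (4 * m * (128 * N * m * |t|) ^ (n - 1) / (n:ℝ) ^ 2) := by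
      intro t
      have hp1 : |t|^(n-2+1) = |t|^(n-1) := by rw [show n-2+1 = n-1 from by omega]
      have hmeask : ∀ k ∈ Finset.Ioo 0 n, Measurable (fun ξ : ℝ =>
          ∫⁻ τ in Set.uIoc 0 t, (‖convR (g k τ) (g (n-k) τ) ξ‖₊ : ℝ≥0∞)) := fun k hk =>
        Measurable.lintegral_prod_right' (((hCm k hk).comp measurable_swap).enorm)
      calc (∫⁻ ξ, (‖g n t ξ‖₊ : ℝ≥0∞))
          ≤ ∫⁻ ξ, ENNReal.ofReal ((n:ℝ) * (N + 1)) * ∑ k ∈ Finset.Ioo 0 n,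
              ∫⁻ τ in Set.uIoc 0 t, (‖convR (g k τ) (g (n-k) τ) ξ‖₊ : ℝ≥0∞) :=
            lintegral_mono (hpt t)
        _ = ENNReal.ofReal ((n:ℝ) * (N + 1)) * ∫⁻ ξ, ∑ k ∈ Finset.Ioo 0 n,
              ∫⁻ τ in Set.uIoc 0 t, (‖convR (g k τ) (g (n-k) τ) ξ‖₊ : ℝ≥0∞) :=
            lintegral_const_mul' _ _ ENNReal.ofReal_ne_top
        _ = ENNReal.ofReal ((n:ℝ) * (N + 1)) * ∑ k ∈ Finset.Ioo 0 n, ∫⁻ ξ,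
              ∫⁻ τ in Set.uIoc 0 t, (‖convR (g k τ) (g (n-k) τ) ξ‖₊ : ℝ≥0∞) := by
            rw [lintegral_finset_sum' _ (fun k hk => (hmeask k hk).aemeasurable)]
        _ = ENNReal.ofReal ((n:ℝ) * (N + 1)) * ∑ k ∈ Finset.Ioo 0 n,
              ∫⁻ τ in Set.uIoc 0 t, ∫⁻ ξ,
                (‖convR (g k τ) (g (n-k) τ) ξ‖₊ : ℝ≥0∞) := by
            congr 1
            apply Finset.sum_congr rfl
            intro k hk
            exact lintegral_lintegral_swap (((hCm k hk).comp measurable_swap).enorm).aemeasurable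
        _ ≤ ENNReal.ofReal ((n:ℝ) * (N + 1)) * ∑ k ∈ Finset.Ioo 0 n,
              ENNReal.ofReal (16*m^2/((k:ℝ)^2*((n-k:ℕ):ℝ)^2) * (128*N*m)^(n-2) *
                |t|^(n-2+1) / ((n-2+1:ℕ):ℝ)) := by
            apply mul_le_mul_right
            apply Finset.sum_le_sum
            intro k hk
            have e1 : ∀ τ : ℝ, ENNReal.ofReal ((16*m^2/((k:ℝ)^2*((n-k:ℕ):ℝ)^2)) *
                (128*N*m*|τ|)^(n-2))
                = ENNReal.ofReal (16*m^2/((k:ℝ)^2*((n-k:ℕ):ℝ)^2) * (128*N*m)^(n-2) *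
                    |τ|^(n-2)) := by
              intro τ; congr 1; rw [mul_pow]; ring
            refine le_trans (lintegral_mono fun τ => hCl1 k hk τ) ?_
            rw [lintegral_congr e1]
            exact time_pow (c := 16*m^2/((k:ℝ)^2*((n-k:ℕ):ℝ)^2) * (128*N*m)^(n-2))
              (by positivity) (n-2) t
        _ = ENNReal.ofReal (((n:ℝ)*(N+1)) * ∑ k ∈ Finset.Ioo 0 n,
              16*m^2/((k:ℝ)^2*((n-k:ℕ):ℝ)^2) * (128*N*m)^(n-2) *
                |t|^(n-2+1) / ((n-2+1:ℕ):ℝ)) := by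
            rw [← ENNReal.ofReal_sum_of_nonneg (fun k _ => by positivity),
              ← ENNReal.ofReal_mul (by positivity)]
        _ ≤ ENNReal.ofReal (4 * m * (128 * N * m * |t|) ^ (n - 1) / (n:ℝ) ^ 2) := by
            apply ENNReal.ofReal_le_ofReal
            have hfac : ∑ k ∈ Finset.Ioo 0 n,
                16*m^2/((k:ℝ)^2*((n-k:ℕ):ℝ)^2) * (128*N*m)^(n-2) *
                  |t|^(n-2+1) / ((n-2+1:ℕ):ℝ)
                = (16*m^2*(128*N*m)^(n-2)*|t|^(n-1)/((n:ℝ)-1)) *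
                    ∑ k ∈ Finset.Ioo 0 n, (1:ℝ)/((k:ℝ)^2*((n-k:ℕ):ℝ)^2) := by
              rw [Finset.mul_sum]
              apply Finset.sum_congr rfl
              intro k _
              rw [hp1, hc1]
              ring
            rw [hfac]
            have hB := S2_bound hn2
            have hpow : (128*N*m*|t|)^(n-1) = (128*N*m)^(n-2) * (128*N*m) * |t|^(n-1) := by
              rw [mul_pow, ← pow_succ, show n-2+1 = n-1 from by omega]
            rw [hpow]
            have hn0' : (0:ℝ) < (n:ℝ) := by linarith
            have hAB : (0:ℝ) ≤ (128*N*m)^(n-2) * |t|^(n-1) := by positivity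
            have hnn : (0:ℝ) ≤ 16*m^2*(128*N*m)^(n-2)*|t|^(n-1)/((n:ℝ)-1) :=
              div_nonneg (by positivity) hd.le
            have key : (n:ℝ)*(N+1)*(128*m^2)/((n:ℝ)-1) ≤ 512*N*m*m := by
              rw [div_le_iff₀ hd]
              have h1 : (n:ℝ)*(N+1) ≤ 4*N*((n:ℝ)-1) := by nlinarith
              calc (n:ℝ)*(N+1)*(128*m^2) ≤ 4*N*((n:ℝ)-1)*(128*m^2) :=
                    mul_le_mul_of_nonneg_right h1 (by positivity)
                _ ≤ 512*N*m*m*((n:ℝ)-1) := by nlinarith [sq_nonneg m, mul_pos hN0 hd]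
            calc ((n:ℝ)*(N+1)) * ((16*m^2*(128*N*m)^(n-2)*|t|^(n-1)/((n:ℝ)-1)) *
                  ∑ k ∈ Finset.Ioo 0 n, (1:ℝ)/((k:ℝ)^2*((n-k:ℕ):ℝ)^2))
                ≤ ((n:ℝ)*(N+1)) * ((16*m^2*(128*N*m)^(n-2)*|t|^(n-1)/((n:ℝ)-1)) *
                    (8/(n:ℝ)^2)) := by
                  have hnN : (0:ℝ) ≤ (n:ℝ)*(N+1) := by positivity
                  exact mul_le_mul_of_nonneg_left (mul_le_mul_of_nonneg_left hB hnn) hnN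
              _ = (((n:ℝ)*(N+1)*(128*m^2)/((n:ℝ)-1)) * ((128*N*m)^(n-2)*|t|^(n-1))) /
                    (n:ℝ)^2 := by ring
              _ ≤ ((512*N*m*m) * ((128*N*m)^(n-2)*|t|^(n-1))) / (n:ℝ)^2 := by
                  gcongr
              _ = 4*m*((128*N*m)^(n-2)*(128*N*m)*|t|^(n-1))/(n:ℝ)^2 := by ring
    -- joint measurability
    have hmeas : Measurable (fun p : ℝ × ℝ => g n p.1 p.2) := by
      have hrep : (fun p : ℝ × ℝ => g n p.1 p.2) = fun p : ℝ × ℝ =>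
          -Complex.I * (p.2:ℂ) * ∑ k ∈ Finset.Ioo 0 n,
            ∫ τ in (0:ℝ)..p.1, Complex.exp (Complex.I * ((p.1:ℂ) - (τ:ℂ)) *
              ((p.2:ℂ)^5 + (b:ℂ)*(p.2:ℂ)^3)) * convR (g k τ) (g (n-k) τ) p.2 :=
        funext fun p => hform p.1 p.2
      rw [hrep]
      apply Measurable.mul
      · exact measurable_const.mul (Complex.measurable_ofReal.comp measurable_snd)
      · apply Finset.measurable_sum
        intro k hk
        apply measurable_parametric_intervalIntegral
          (Φ := fun (p : ℝ × ℝ) (τ : ℝ) => Complex.exp (Complex.I * ((p.1:ℂ) - (τ:ℂ)) *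
            ((p.2:ℂ)^5 + (b:ℂ)*(p.2:ℂ)^3)) * convR (g k τ) (g (n-k) τ) p.2)
        apply Measurable.mul
        · apply Continuous.measurable
          apply Complex.continuous_exp.comp
          fun_prop
        · exact (hCm k hk).comp (measurable_snd.prodMk (measurable_snd.comp measurable_fst))
    exact ⟨hmeas, hS, hM, hA⟩



lemma rpow_half_sq (x : ℝ≥0∞) : (x ^ ((1:ℝ)/2)) ^ (2:ℕ) = x := by
  rw [← ENNReal.rpow_natCast _ 2, ← ENNReal.rpow_mul]
  norm_num

lemma sq_rpow_half (x : ℝ≥0∞) : (x ^ (2:ℕ)) ^ ((1:ℝ)/2) = x := by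
  rw [← ENNReal.rpow_natCast x 2, ← ENNReal.rpow_mul]
  norm_num

theorem statement13 (s : ℝ) (hs : s < -(1 / 2 : ℝ)) :
    ∃ C : ℝ, 0 < C ∧
      ∀ b : ℝ, b = -1 ∨ b = 0 ∨ b = 1 →
      ∀ N : ℝ, 2 ≤ N →
      ∀ g : ℕ → ℝ → ℝ → ℂ, KawPicard b (wNs N s) g →
      ∀ t : ℝ, 0 < t → ∀ n : ℕ, 2 ≤ n →
        HsR s (g n t) ≤
          ENNReal.ofReal (C ^ n * (N * t) ^ (n - 1)) *
            L1R (wNs N s) ^ (n - 2) * L2R (wNs N s) ^ 2 := by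
  refine ⟨32, by norm_num, ?_⟩
  intro b hb N hN g hg t ht n hn
  have hm : 0 < mmc N s := mmc_pos hN s
  set m : ℝ := mmc N s with hmdef
  have hN0 : (0:ℝ) < N := by linarith
  obtain ⟨-, -, hM, hA⟩ := main_inv hN hg n (by omega)
  have habs : |t| = t := abs_of_pos ht
  have hM' : ∀ ξ : ℝ, (‖g n t ξ‖₊ : ℝ≥0∞) ≤
      ENNReal.ofReal (m * (128 * N * m * t) ^ (n - 1)) := by
    intro ξ; have := hM t ξ; rwa [habs] at this
  have hA' : (∫⁻ ξ, (‖g n t ξ‖₊ : ℝ≥0∞)) ≤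
      ENNReal.ofReal (4 * m * (128 * N * m * t) ^ (n - 1) / (n:ℝ) ^ 2) := by
    have := hA t; rwa [habs] at this
  set X : ℝ := (128 * N * m * t) ^ (n - 1) with hX
  have hX0 : (0:ℝ) ≤ X := by
    rw [hX]
    have : (0:ℝ) ≤ 128 * N * m * t := by positivity
    positivity
  have hL1 : L1R (wNs N s) = ENNReal.ofReal (4 * m) := lintegral_wNs hN
  have hL2 : L2R (wNs N s) ^ 2 = ENNReal.ofReal (4 * m ^ 2) := by
    have : L2R (wNs N s) ^ (2:ℕ)
        = ((∫⁻ x, (‖wNs N s x‖₊ : ℝ≥0∞) ^ 2) ^ ((1:ℝ)/2)) ^ (2:ℕ) := rfl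
    rw [this, rpow_half_sq, lintegral_wNs_sq hN]
  have hw : ∀ ξ : ℝ, ENNReal.ofReal ((1 + ξ ^ 2) ^ s) ≤ 1 := fun ξ => by
    apply ENNReal.ofReal_le_one.2
    apply Real.rpow_le_one_of_one_le_of_nonpos (by nlinarith [sq_nonneg ξ]) (by linarith)
  have hint : (∫⁻ ξ : ℝ, ENNReal.ofReal ((1 + ξ ^ 2) ^ s) * (‖g n t ξ‖₊ : ℝ≥0∞) ^ 2)
      ≤ ENNReal.ofReal (2 * m * X) ^ (2:ℕ) := by
    calc (∫⁻ ξ : ℝ, ENNReal.ofReal ((1 + ξ ^ 2) ^ s) * (‖g n t ξ‖₊ : ℝ≥0∞) ^ 2)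
        ≤ ∫⁻ ξ, ENNReal.ofReal (m * X) * (‖g n t ξ‖₊ : ℝ≥0∞) := by
          apply lintegral_mono
          intro ξ
          calc ENNReal.ofReal ((1 + ξ ^ 2) ^ s) * (‖g n t ξ‖₊ : ℝ≥0∞) ^ 2
              ≤ 1 * (‖g n t ξ‖₊ : ℝ≥0∞) ^ 2 := mul_le_mul_left (hw ξ) _
            _ = (‖g n t ξ‖₊ : ℝ≥0∞) * (‖g n t ξ‖₊ : ℝ≥0∞) := by rw [one_mul, sq]
            _ ≤ ENNReal.ofReal (m * X) * (‖g n t ξ‖₊ : ℝ≥0∞) :=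
                mul_le_mul_left (hM' ξ) _
      _ = ENNReal.ofReal (m * X) * ∫⁻ ξ, (‖g n t ξ‖₊ : ℝ≥0∞) :=
          lintegral_const_mul' _ _ ENNReal.ofReal_ne_top
      _ ≤ ENNReal.ofReal (m * X) * ENNReal.ofReal (4 * m * X / (n:ℝ) ^ 2) :=
          mul_le_mul_right hA' _
      _ ≤ ENNReal.ofReal (2 * m * X) ^ (2:ℕ) := by
          rw [← ENNReal.ofReal_pow (by positivity), ← ENNReal.ofReal_mul (by positivity)]
          apply ENNReal.ofReal_le_ofReal
          have hn1 : (1:ℝ) ≤ (n:ℝ) ^ 2 := by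
            have : (1:ℝ) ≤ (n:ℝ) := by exact_mod_cast (by omega : 1 ≤ n)
            nlinarith
          have hdiv : 4 * m * X / (n:ℝ) ^ 2 ≤ 4 * m * X :=
            div_le_self (by positivity) hn1
          nlinarith [mul_nonneg hm.le hX0, mul_le_mul_of_nonneg_left hdiv
            (mul_nonneg hm.le hX0)]
  have hHs : HsR s (g n t) ≤ ENNReal.ofReal (2 * m * X) := by
    have h0 : HsR s (g n t)
        = (∫⁻ ξ : ℝ, ENNReal.ofReal ((1 + ξ ^ 2) ^ s) * (‖g n t ξ‖₊ : ℝ≥0∞) ^ 2)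
          ^ ((1:ℝ)/2) := rfl
    rw [h0]
    calc (∫⁻ ξ : ℝ, ENNReal.ofReal ((1 + ξ ^ 2) ^ s) * (‖g n t ξ‖₊ : ℝ≥0∞) ^ 2) ^ ((1:ℝ)/2)
        ≤ (ENNReal.ofReal (2 * m * X) ^ (2:ℕ)) ^ ((1:ℝ)/2) :=
          ENNReal.rpow_le_rpow hint (by norm_num)
      _ = ENNReal.ofReal (2 * m * X) := sq_rpow_half _
  refine le_trans hHs ?_
  rw [hL1, hL2]
  have hNt : (0:ℝ) ≤ N * t := by positivity
  have h32nn : (0:ℝ) ≤ 32 ^ n * (N * t) ^ (n - 1) := by positivity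
  rw [← ENNReal.ofReal_pow (by positivity : (0:ℝ) ≤ 4 * m),
    ← ENNReal.ofReal_mul h32nn, ← ENNReal.ofReal_mul (by positivity)]
  apply ENNReal.ofReal_le_ofReal
  have e1 : X = 128 ^ (n-1) * (N * t) ^ (n-1) * m ^ (n-1) := by
    rw [hX, show (128 * N * m * t : ℝ) = 128 * ((N * t) * m) from by ring, mul_pow, mul_pow]
    ring
  have e2 : (4 * m) ^ (n-2) = 4 ^ (n-2) * m ^ (n-2) := mul_pow _ _ _
  have hmm : m * m ^ (n-1) = m ^ n := by
    rw [← pow_succ', show n-1+1 = n from by omega]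
  have h32 : (32:ℝ) ^ n = 32 * 32 ^ (n-1) := by
    conv_lhs => rw [show n = n-1+1 from by omega]
    rw [pow_succ']
  have h128 : (32:ℝ) ^ (n-1) * 4 ^ (n-1) = 128 ^ (n-1) := by
    rw [← mul_pow]; norm_num
  have h4 : (4:ℝ) ^ (n-2) * 4 = 4 ^ (n-1) := by
    rw [← pow_succ, show n-2+1 = n-1 from by omega]
  have hm2 : m ^ (n-2) * m ^ 2 = m ^ n := by
    rw [← pow_add, show n-2+2 = n from by omega]
  have eL : 2 * m * X = 2 * (128 ^ (n-1) * (N * t) ^ (n-1) * m ^ n) := by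
    rw [e1, ← hmm]; ring
  have eR : 32 ^ n * (N * t) ^ (n-1) * (4 * m) ^ (n-2) * (4 * m ^ 2)
      = 32 * (128 ^ (n-1) * (N * t) ^ (n-1) * m ^ n) := by
    rw [e2, h32, ← h128, ← h4, ← hm2]; ring
  rw [eL, eR]
  have hpos : (0:ℝ) ≤ 128 ^ (n-1) * (N * t) ^ (n-1) * m ^ n := by positivity
  nlinarith [hpos]

end
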